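/- Let X have the Binomial(N, c/N) distribution with 0 < c < 1, let (S_k) be a random walk with S_0 = 1 and i.i.d. steps distributed as X - 1, and let τ = inf{k : S_k = 0}. Then for every y ≥ 1, P(τ ≥ y) ≤ (1/c) exp(-(c - 1 - ln c) y). -/

import Mathlib

open MeasureTheory ProbabilityTheory Finset

lemma binom_expand (x y : ℝ) (N : ℕ) :
    ∑ k ∈ Finset.range (N+1), (N.choose k : ℝ) * x ^ k * y ^ (N - k) = (x + y) ^ N := by
  rw [add_pow]
  exact Finset.sum_congr rfl fun k _ => by ring

lemma integral_of_int_rv {Ω : Type*} [MeasurableSpace Ω] (μ : Measure Ω)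
    [IsProbabilityMeasure μ] (N : ℕ) (ξ : Ω → ℤ) (hmeas : Measurable ξ)
    (p : ℕ → ℝ) (hp : ∀ k, 0 ≤ p k)
    (hdist : ∀ k : ℕ, μ {ω | ξ ω = (k : ℤ) - 1} = ENNReal.ofReal (p k))
    (hsum : ∑ k ∈ Finset.range (N+1), p k = 1) (g : ℤ → ℝ) :
    Integrable (fun ω => g (ξ ω)) μ ∧
    (∫ ω, g (ξ ω) ∂μ) = ∑ k ∈ Finset.range (N+1), g ((k : ℤ) - 1) * p k ∧
    μ {ω | ξ ω < -1} = 0 := by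
  classical
  set A : ℕ → Set Ω := fun k => {ω | ξ ω = (k : ℤ) - 1} with hA
  have hAm : ∀ k, MeasurableSet (A k) := fun k => hmeas (measurableSet_singleton _)
  have hdisj : (↑(Finset.range (N+1)) : Set ℕ).PairwiseDisjoint A := by
    intro k _ l _ hkl
    refine Set.disjoint_left.2 fun ω hk hl => hkl ?_
    have : (k : ℤ) - 1 = (l : ℤ) - 1 := by rw [← hk, ← hl]
    omega
  have hG : μ (⋃ k ∈ Finset.range (N+1), A k) = 1 := by
    rw [measure_biUnion_finset hdisj (fun k _ => hAm k)]
    simp_rw [hA]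
    calc (∑ k ∈ Finset.range (N+1), μ {ω | ξ ω = (k : ℤ) - 1})
        = ∑ k ∈ Finset.range (N+1), ENNReal.ofReal (p k) := by
          exact Finset.sum_congr rfl fun k _ => hdist k
      _ = ENNReal.ofReal (∑ k ∈ Finset.range (N+1), p k) :=
          (ENNReal.ofReal_sum_of_nonneg (fun k _ => hp k)).symm
      _ = 1 := by rw [hsum, ENNReal.ofReal_one]
  have hGmeas : MeasurableSet (⋃ k ∈ Finset.range (N+1), A k) :=
    Finset.measurableSet_biUnion _ fun k _ => hAm k
  have hcompl : μ (⋃ k ∈ Finset.range (N+1), A k)ᶜ = 0 := by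
    rw [measure_compl hGmeas (measure_ne_top μ _), hG, measure_univ, tsub_self]
  have hGae : ∀ᵐ ω ∂μ, ω ∈ ⋃ k ∈ Finset.range (N+1), A k := by
    rw [ae_iff]
    simpa [Set.compl_def] using hcompl
  set F : Ω → ℝ := fun ω => ∑ k ∈ Finset.range (N+1),
    (A k).indicator (fun _ => g ((k : ℤ) - 1)) ω with hF
  have hae : (fun ω => g (ξ ω)) =ᵐ[μ] F := by
    filter_upwards [hGae] with ω hω
    simp only [Set.mem_iUnion, exists_prop] at hω
    obtain ⟨k, hkr, hωk⟩ := hω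
    have hξ : ξ ω = (k : ℤ) - 1 := hωk
    show g (ξ ω) = ∑ l ∈ Finset.range (N+1), (A l).indicator (fun _ => g ((l : ℤ) - 1)) ω
    rw [Finset.sum_eq_single k]
    · rw [Set.indicator_of_mem hωk, hξ]
    · intro l _ hlk
      refine Set.indicator_of_notMem (fun hl => hlk ?_) _
      have hξl : ξ ω = (l : ℤ) - 1 := hl
      omega
    · exact fun h => absurd hkr h
  have hFint : Integrable F μ :=
    integrable_finset_sum _ fun k _ => (integrable_const _).indicator (hAm k)
  refine ⟨hFint.congr hae.symm, ?_, ?_⟩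
  · rw [integral_congr_ae hae, hF,
      integral_finset_sum _ (fun k _ => (integrable_const _).indicator (hAm k))]
    refine Finset.sum_congr rfl fun k _ => ?_
    rw [integral_indicator_const _ (hAm k), measureReal_def, show μ (A k) = ENNReal.ofReal (p k) from hdist k, smul_eq_mul,
      ENNReal.toReal_ofReal (hp k), mul_comm]
  · refine measure_mono_null ?_ hcompl
    intro ω hω
    simp only [Set.mem_compl_iff, Set.mem_iUnion, exists_prop, not_exists, not_and]
    intro k _
    intro hk
    have : ξ ω = (k : ℤ) - 1 := hk
    have : ξ ω < -1 := hω
    omega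

/-- Let `X ~ Binomial(N, c/N)` with `0 < c < 1`, let `S_k = 1 + ∑_{j<k} η_j`
be a random walk with i.i.d. steps `η_j` distributed as `X - 1`, and let
`τ = inf{k : S_k = 0}`.  Then for every `y ≥ 1`,
`P(τ ≥ y) ≤ (1/c) exp(-(c - 1 - ln c) y)`.  (The event `τ ≥ y` is `∀ k < y, S_k ≠ 0`.) -/
theorem total_progeny_tail_bound {Ω : Type*} [MeasurableSpace Ω] (μ : Measure Ω)
    [IsProbabilityMeasure μ] (N : ℕ) (hN : 0 < N) (c : ℝ) (hc0 : 0 < c) (hc1 : c < 1)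
    (η : ℕ → Ω → ℤ)
    (hηmeas : ∀ i, Measurable (η i))
    (hηdist : ∀ i : ℕ, ∀ k : ℕ, μ {ω | η i ω = (k : ℤ) - 1}
      = ENNReal.ofReal ((N.choose k : ℝ) * (c / N) ^ k * (1 - c / N) ^ (N - k)))
    (hηindep : iIndepFun η μ) :
    ∀ y : ℕ, 1 ≤ y →
      (μ {ω | ∀ k < y, (1 + ∑ j ∈ Finset.range k, η j ω) ≠ 0}).toReal
        ≤ (1 / c) * Real.exp (-((c - 1 - Real.log c) * y)) := by
  intro y hy
  classical
  have hN1 : (1:ℝ) ≤ (N:ℝ) := by exact_mod_cast hN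
  have hNpos : (0:ℝ) < (N:ℝ) := by linarith
  -- basic pmf facts
  set p : ℕ → ℝ := fun k => (N.choose k : ℝ) * (c / N) ^ k * (1 - c / N) ^ (N - k) with hp_def
  have hcN0 : 0 ≤ c / N := by positivity
  have hcN1 : c / N ≤ 1 := by
    rw [div_le_one hNpos]; linarith
  have hp : ∀ k, 0 ≤ p k := fun k =>
    mul_nonneg (mul_nonneg (by positivity) (by positivity)) (pow_nonneg (by linarith) _)
  have hsum : ∑ k ∈ Finset.range (N+1), p k = 1 := by
    rw [hp_def]
    rw [binom_expand (c/N) (1 - c/N) N]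
    rw [show c/N + (1 - c/N) = 1 by ring, one_pow]
  -- exponent
  set θ : ℝ := -Real.log c with hθ_def
  have hθpos : 0 < θ := by
    rw [hθ_def, neg_pos]
    exact Real.log_neg hc0 hc1
  have hexpθ : Real.exp θ = c⁻¹ := by
    rw [hθ_def, Real.exp_neg, Real.exp_log hc0]
  have hexpnθ : Real.exp (-θ) = c := by
    rw [hθ_def, neg_neg, Real.exp_log hc0]
  set g : ℤ → ℝ := fun z => Real.exp (θ * (z : ℝ)) with hg_def
  set X : ℕ → Ω → ℝ := fun j ω => ((η j ω : ℤ) : ℝ) with hX_def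
  have hXmeas : ∀ j, Measurable (X j) := fun j => measurable_from_top.comp (hηmeas j)
  have hXindep : iIndepFun X μ :=
    hηindep.comp (fun _ => (Int.cast : ℤ → ℝ)) (fun _ => measurable_from_top)
  -- per-coordinate facts
  have hkey : ∀ j : ℕ,
      Integrable (fun ω => g (η j ω)) μ ∧
      (∫ ω, g (η j ω) ∂μ) = ∑ k ∈ Finset.range (N+1), g ((k : ℤ) - 1) * p k ∧
      μ {ω | η j ω < -1} = 0 :=
    fun j => integral_of_int_rv μ N (η j) (hηmeas j) p hp (hηdist j) hsum g
  have hint : ∀ j : ℕ, Integrable (fun ω => Real.exp (θ * X j ω)) μ := fun j => (hkey j).1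
  -- mgf bound
  have hmgf_le : ∀ j : ℕ, mgf (X j) μ θ ≤ c * Real.exp (1 - c) := by
    intro j
    have hval : mgf (X j) μ θ = ∑ k ∈ Finset.range (N+1), g ((k : ℤ) - 1) * p k := (hkey j).2.1
    rw [hval]
    have hterm : ∀ k : ℕ, g ((k : ℤ) - 1) * p k
        = c * ((N.choose k : ℝ) * ((1:ℝ)/N) ^ k * (1 - c / N) ^ (N - k)) := by
      intro k
      have h1 : g ((k : ℤ) - 1) = c⁻¹ ^ k * c := by
        rw [hg_def]
        push_cast
        rw [show θ * ((k:ℝ) - 1) = (k:ℝ) * θ + (-θ) by ring, Real.exp_add,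
          Real.exp_nat_mul, hexpθ, hexpnθ]
      rw [h1, hp_def]
      have h2 : c⁻¹ ^ k * (c / N) ^ k = ((1:ℝ)/N) ^ k := by
        rw [← mul_pow]
        congr 1
        field_simp
      calc c⁻¹ ^ k * c * ((N.choose k : ℝ) * (c / N) ^ k * (1 - c / N) ^ (N - k))
          = c * ((N.choose k : ℝ) * (c⁻¹ ^ k * (c / N) ^ k) * (1 - c / N) ^ (N - k)) := by ring
        _ = c * ((N.choose k : ℝ) * ((1:ℝ)/N) ^ k * (1 - c / N) ^ (N - k)) := by rw [h2]
    calc (∑ k ∈ Finset.range (N+1), g ((k : ℤ) - 1) * p k)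
        = ∑ k ∈ Finset.range (N+1),
            c * ((N.choose k : ℝ) * ((1:ℝ)/N) ^ k * (1 - c / N) ^ (N - k)) :=
          Finset.sum_congr rfl fun k _ => hterm k
      _ = c * ((1:ℝ)/N + (1 - c / N)) ^ N := by
          rw [← Finset.mul_sum, binom_expand]
      _ = c * (1 + (1 - c)/N) ^ N := by
          congr 2
          ring
      _ ≤ c * Real.exp ((1 - c)/N) ^ N := by
          refine mul_le_mul_of_nonneg_left (pow_le_pow_left₀ ?_ ?_ N) hc0.le
          · have : 0 ≤ (1 - c)/N := div_nonneg (by linarith) hNpos.le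
            linarith
          · have := Real.add_one_le_exp ((1 - c)/N)
            linarith
      _ = c * Real.exp (1 - c) := by
          rw [← Real.exp_nat_mul]
          congr 1
          field_simp
  -- event inclusion
  set m : ℕ := y - 1 with hm_def
  have hmy : m < y := by omega
  set W : Ω → ℝ := ∑ j ∈ Finset.range m, X j with hW_def
  set Bad : Set Ω := ⋃ j ∈ Finset.range m, {ω | η j ω < -1} with hBad_def
  have hBad0 : μ Bad = 0 := by
    rw [hBad_def]
    refine le_antisymm ?_ (zero_le)
    calc μ (⋃ j ∈ Finset.range m, {ω | η j ω < -1})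
        ≤ ∑ j ∈ Finset.range m, μ {ω | η j ω < -1} := measure_biUnion_finset_le _ _
      _ = 0 := by
          refine Finset.sum_eq_zero fun j _ => (hkey j).2.2
  have hsub : {ω | ∀ k < y, (1 + ∑ j ∈ Finset.range k, η j ω) ≠ 0}
      ⊆ {ω | (0:ℝ) ≤ W ω} ∪ Bad := by
    intro ω hω
    by_cases hGood : ∀ j < m, -1 ≤ η j ω
    · left
      have hstep : ∀ k, k ≤ m → 1 ≤ 1 + ∑ j ∈ Finset.range k, η j ω := by
        intro k
        induction k with
        | zero => simp
        | succ n ih =>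
          intro hn
          have h3 := ih (by omega)
          have h4 : -1 ≤ η n ω := hGood n (by omega)
          have h5 : (1 + ∑ j ∈ Finset.range (n+1), η j ω) ≠ 0 := hω (n+1) (by omega)
          rw [Finset.sum_range_succ] at h5 ⊢
          by_contra hcon
          push_neg at hcon
          apply h5
          linarith [Int.lt_iff_add_one_le.mp hcon]
      have hfin := hstep m le_rfl
      have hsumnn : (0:ℤ) ≤ ∑ j ∈ Finset.range m, η j ω := by linarith
      show (0:ℝ) ≤ W ω
      rw [hW_def]
      have : W ω = ((∑ j ∈ Finset.range m, η j ω : ℤ) : ℝ) := by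
        rw [hW_def]
        push_cast [Finset.sum_apply]
        rfl
      rw [← hW_def, this]
      exact_mod_cast hsumnn
    · right
      push_neg at hGood
      obtain ⟨j, hj, hjlt⟩ := hGood
      rw [hBad_def]
      refine Set.mem_biUnion (Finset.mem_range.mpr hj) ?_
      simpa using hjlt
  -- Chernoff
  have hintW : Integrable (fun ω => Real.exp (θ * (∑ j ∈ Finset.range m, X j) ω)) μ :=
    hXindep.integrable_exp_mul_sum hXmeas (fun j _ => hint j)
  have hch := measure_ge_le_exp_mul_mgf (μ := μ) (X := ∑ j ∈ Finset.range m, X j)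
    (t := θ) 0 hθpos.le hintW
  rw [mul_zero, Real.exp_zero, one_mul] at hch
  have hmgfsum : mgf (∑ j ∈ Finset.range m, X j) μ θ = ∏ j ∈ Finset.range m, mgf (X j) μ θ :=
    hXindep.mgf_sum hXmeas _
  have hprod_le : (∏ j ∈ Finset.range m, mgf (X j) μ θ) ≤ (c * Real.exp (1 - c)) ^ m := by
    calc (∏ j ∈ Finset.range m, mgf (X j) μ θ)
        ≤ ∏ j ∈ Finset.range m, (c * Real.exp (1 - c)) :=
          Finset.prod_le_prod (fun j _ => mgf_nonneg) (fun j _ => hmgf_le j)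
      _ = (c * Real.exp (1 - c)) ^ m := by rw [Finset.prod_const, Finset.card_range]
  -- measure comparison
  have hmeas_le : μ {ω | ∀ k < y, (1 + ∑ j ∈ Finset.range k, η j ω) ≠ 0}
      ≤ μ {ω | (0:ℝ) ≤ (∑ j ∈ Finset.range m, X j) ω} := by
    calc μ {ω | ∀ k < y, (1 + ∑ j ∈ Finset.range k, η j ω) ≠ 0}
        ≤ μ ({ω | (0:ℝ) ≤ W ω} ∪ Bad) := measure_mono hsub
      _ ≤ μ {ω | (0:ℝ) ≤ W ω} + μ Bad := measure_union_le _ _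
      _ = μ {ω | (0:ℝ) ≤ W ω} := by rw [hBad0, add_zero]
      _ = μ {ω | (0:ℝ) ≤ (∑ j ∈ Finset.range m, X j) ω} := by rw [hW_def]
  -- final chain
  have hfinal : (c * Real.exp (1 - c)) ^ m ≤ (1 / c) * Real.exp (-((c - 1 - Real.log c) * y)) := by
    have hce : c * Real.exp (1 - c) = Real.exp (-(c - 1 - Real.log c)) := by
      rw [show -(c - 1 - Real.log c) = Real.log c + (1 - c) by ring, Real.exp_add,
        Real.exp_log hc0]
    rw [hce, ← Real.exp_nat_mul]
    have hmcast : (m : ℝ) = (y : ℝ) - 1 := by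
      rw [hm_def]
      push_cast [Nat.cast_sub hy]
      ring
    rw [hmcast]
    have hsplit : ((y:ℝ) - 1) * (-(c - 1 - Real.log c))
        = (c - 1 - Real.log c) + (-((c - 1 - Real.log c) * y)) := by ring
    rw [hsplit, Real.exp_add]
    have hb : Real.exp (c - 1 - Real.log c) ≤ 1 / c := by
      rw [show c - 1 - Real.log c = (c - 1) + (-Real.log c) by ring, Real.exp_add,
        Real.exp_neg, Real.exp_log hc0]
      have h1 : Real.exp (c - 1) ≤ 1 := Real.exp_le_one_iff.mpr (by linarith)
      rw [one_div]
      calc Real.exp (c - 1) * c⁻¹ ≤ 1 * c⁻¹ :=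
            mul_le_mul_of_nonneg_right h1 (by positivity)
        _ = c⁻¹ := one_mul _
    exact mul_le_mul_of_nonneg_right hb (Real.exp_nonneg _)
  calc (μ {ω | ∀ k < y, (1 + ∑ j ∈ Finset.range k, η j ω) ≠ 0}).toReal
      ≤ (μ {ω | (0:ℝ) ≤ (∑ j ∈ Finset.range m, X j) ω}).toReal :=
        ENNReal.toReal_mono (measure_ne_top μ _) hmeas_le
    _ ≤ mgf (∑ j ∈ Finset.range m, X j) μ θ := hch
    _ = ∏ j ∈ Finset.range m, mgf (X j) μ θ := hmgfsum
    _ ≤ (c * Real.exp (1 - c)) ^ m := hprod_le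
    _ ≤ (1 / c) * Real.exp (-((c - 1 - Real.log c) * y)) := hfinal
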